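/- arXiv:2112.04437 — 5 statements merged into one kernel-verified Lean document; each statement's English description precedes it below -/
import Mathlib

section
/- Let x, y : [0,∞) → ℝ be nonnegative C¹ functions satisfying x' ≤ y, x(0) = 1, y' ≤ c·e^{-δt}·x, y(0) = 0, for constants c, δ > 0. Then there exists C = C(c, δ) such that x(t) ≤ 1 + C·t and y(t) ≤ C·min(1, t) for all t ≥ 0. -/
open Set

theorem stmt_2 (c δ : ℝ) (hc : 0 < c) (hδ : 0 < δ) (x y x' y' : ℝ → ℝ)
    (hxd : ∀ t ∈ Ici (0:ℝ), HasDerivWithinAt x (x' t) (Ici 0) t)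
    (hyd : ∀ t ∈ Ici (0:ℝ), HasDerivWithinAt y (y' t) (Ici 0) t)
    (hx'c : ContinuousOn x' (Ici 0)) (hy'c : ContinuousOn y' (Ici 0))
    (hxnn : ∀ t ∈ Ici (0:ℝ), 0 ≤ x t) (hynn : ∀ t ∈ Ici (0:ℝ), 0 ≤ y t)
    (hx0 : x 0 = 1) (hy0 : y 0 = 0)
    (hx' : ∀ t ∈ Ici (0:ℝ), x' t ≤ y t)
    (hy' : ∀ t ∈ Ici (0:ℝ), y' t ≤ c * Real.exp (-δ * t) * x t) :
    ∃ C : ℝ, 0 < C ∧ ∀ t ∈ Ici (0:ℝ), x t ≤ 1 + C * t ∧ y t ≤ C * min 1 t := by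
  set K : ℝ := c / δ with hK
  have hKpos : 0 < K := div_pos hc hδ
  have hKδ : K * δ = c := div_mul_cancel₀ c hδ.ne'
  set C₀ : ℝ := K * Real.exp (K / δ) with hC₀
  have hC₀pos : 0 < C₀ := mul_pos hKpos (Real.exp_pos _)
  -- derivative of E t = exp (-δ * t)
  have hE : ∀ t : ℝ, HasDerivAt (fun s => Real.exp (-δ * s))
      (Real.exp (-δ * t) * (-δ)) t := by
    intro t
    have h1 : HasDerivAt (fun s : ℝ => -δ * s) (-δ) t := by
      simpa using (hasDerivAt_id t).const_mul (-δ)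
    exact h1.exp
  -- the Lyapunov function w
  set w : ℝ → ℝ := fun t => (y t + K * (x t * Real.exp (-δ * t))) *
      Real.exp (K / δ * Real.exp (-δ * t)) with hw
  set W' : ℝ → ℝ := fun t =>
      (y' t + K * (x' t * Real.exp (-δ * t) + x t * (Real.exp (-δ * t) * (-δ)))) *
        Real.exp (K / δ * Real.exp (-δ * t)) +
      (y t + K * (x t * Real.exp (-δ * t))) *
        (Real.exp (K / δ * Real.exp (-δ * t)) * (K / δ * (Real.exp (-δ * t) * (-δ)))) with hW'
  have hwd : ∀ t ∈ Ici (0:ℝ), HasDerivWithinAt w (W' t) (Ici 0) t := by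
    intro t ht
    have hu : HasDerivWithinAt (fun s => y s + K * (x s * Real.exp (-δ * s)))
        (y' t + K * (x' t * Real.exp (-δ * t) + x t * (Real.exp (-δ * t) * (-δ))))
        (Ici 0) t :=
      (hyd t ht).add (((hxd t ht).mul (hE t).hasDerivWithinAt).const_mul K)
    have hψ : HasDerivWithinAt (fun s => Real.exp (K / δ * Real.exp (-δ * s)))
        (Real.exp (K / δ * Real.exp (-δ * t)) * (K / δ * (Real.exp (-δ * t) * (-δ))))
        (Ici 0) t :=
      (((hE t).const_mul (K / δ)).exp).hasDerivWithinAt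
    exact hu.mul hψ
  have hW'nonpos : ∀ t ∈ Ici (0:ℝ), W' t ≤ 0 := by
    intro t ht
    have he : (0:ℝ) < Real.exp (-δ * t) := Real.exp_pos _
    have hp : (0:ℝ) < Real.exp (K / δ * Real.exp (-δ * t)) := Real.exp_pos _
    set e := Real.exp (-δ * t)
    set p := Real.exp (K / δ * Real.exp (-δ * t))
    have h1 : y' t ≤ K * δ * (e * x t) := by
      have := hy' t ht; rw [hKδ]; nlinarith [this]
    have h2 : x' t ≤ y t := hx' t ht
    have hxt : 0 ≤ x t := hxnn t ht
    have hyt : 0 ≤ y t := hynn t ht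
    have hfac : y' t + K * (x' t * e + x t * (e * (-δ))) ≤ K * (e * y t) := by
      nlinarith [mul_le_mul_of_nonneg_left (mul_le_mul_of_nonneg_right h2 he.le) hKpos.le]
    have hδne : δ ≠ 0 := hδ.ne'
    have hsecond : (y t + K * (x t * e)) * (p * (K / δ * (e * (-δ))))
        = -(K * e * p * (y t + K * (x t * e))) := by
      field_simp
    have : W' t ≤ K * (e * y t) * p - K * e * p * (y t + K * (x t * e)) := by
      rw [hW']; dsimp only
      rw [hsecond]
      have := mul_le_mul_of_nonneg_right hfac hp.le
      linarith
    have hfin : K * (e * y t) * p - K * e * p * (y t + K * (x t * e)) ≤ 0 := by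
      have : K * e * p * (K * (x t * e)) ≥ 0 := by positivity
      nlinarith
    linarith
  -- w is antitone on Ici 0
  have hwc : ContinuousOn w (Ici 0) := fun t ht => (hwd t ht).continuousWithinAt
  have hanti : AntitoneOn w (Ici 0) := by
    apply antitoneOn_of_hasDerivWithinAt_nonpos (convex_Ici 0) hwc
    · intro t ht
      rw [interior_Ici] at ht ⊢
      exact (hwd t (mem_Ici.mpr (le_of_lt ht))).mono Ioi_subset_Ici_self
    · intro t ht
      rw [interior_Ici] at ht
      exact hW'nonpos t (mem_Ici.mpr (le_of_lt ht))
  have hw0 : w 0 = C₀ := by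
    simp [hw, hy0, hx0, hC₀]
  -- uniform bound on y
  have hybound : ∀ t ∈ Ici (0:ℝ), y t ≤ C₀ := by
    intro t ht
    have h1 : w t ≤ w 0 := hanti (self_mem_Ici) ht ht
    have he : (0:ℝ) < Real.exp (-δ * t) := Real.exp_pos _
    have hp : (1:ℝ) ≤ Real.exp (K / δ * Real.exp (-δ * t)) := by
      apply Real.one_le_exp; positivity
    have hxt : 0 ≤ x t := hxnn t ht
    have hyt : 0 ≤ y t := hynn t ht
    have hu : y t ≤ y t + K * (x t * Real.exp (-δ * t)) := by
      have : 0 ≤ K * (x t * Real.exp (-δ * t)) := by positivity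
      linarith
    have : y t ≤ w t := by
      rw [hw]; dsimp only
      calc y t ≤ y t + K * (x t * Real.exp (-δ * t)) := hu
        _ ≤ (y t + K * (x t * Real.exp (-δ * t))) * Real.exp (K / δ * Real.exp (-δ * t)) := by
            nlinarith
    linarith [hw0 ▸ h1]
  -- linear bound on x
  have hxbound : ∀ t ∈ Ici (0:ℝ), x t ≤ 1 + C₀ * t := by
    intro t ht
    have hgd : ∀ s ∈ Ici (0:ℝ), HasDerivWithinAt (fun s => x s - C₀ * s)
        (x' s - C₀) (Ici 0) s := by
      intro s hs
      have hlin : HasDerivWithinAt (fun s : ℝ => C₀ * s) C₀ (Ici 0) s := by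
        simpa using ((hasDerivAt_id s).const_mul C₀).hasDerivWithinAt
      exact (hxd s hs).sub hlin
    have hganti : AntitoneOn (fun s => x s - C₀ * s) (Ici 0) := by
      apply antitoneOn_of_hasDerivWithinAt_nonpos (convex_Ici 0)
        (fun s hs => (hgd s hs).continuousWithinAt)
      · intro s hs
        rw [interior_Ici] at hs ⊢
        exact (hgd s (mem_Ici.mpr (le_of_lt hs))).mono Ioi_subset_Ici_self
      · intro s hs
        rw [interior_Ici] at hs
        have := hx' s (mem_Ici.mpr (le_of_lt hs))
        have := hybound s (mem_Ici.mpr (le_of_lt hs))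
        linarith
    have := hganti self_mem_Ici ht ht
    simp only [mul_zero, sub_zero, hx0] at this
    linarith
  -- bound y on [0,1]
  set C₁ : ℝ := c * (1 + C₀) with hC₁
  have hC₁pos : 0 < C₁ := by positivity
  have hysmall : ∀ t ∈ Icc (0:ℝ) 1, y t ≤ C₁ * t := by
    intro t ht
    have hhd : ∀ s ∈ Icc (0:ℝ) 1, HasDerivWithinAt (fun s => y s - C₁ * s)
        (y' s - C₁) (Icc 0 1) s := by
      intro s hs
      have hlin : HasDerivWithinAt (fun s : ℝ => C₁ * s) C₁ (Icc 0 1) s := by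
        simpa using ((hasDerivAt_id s).const_mul C₁).hasDerivWithinAt
      exact ((hyd s hs.1).mono Icc_subset_Ici_self).sub hlin
    have hhanti : AntitoneOn (fun s => y s - C₁ * s) (Icc 0 1) := by
      apply antitoneOn_of_hasDerivWithinAt_nonpos (convex_Icc 0 1)
        (fun s hs => (hhd s hs).continuousWithinAt)
      · intro s hs
        rw [interior_Icc] at hs ⊢
        exact (hhd s ⟨hs.1.le, hs.2.le⟩).mono Ioo_subset_Icc_self
      · intro s hs
        rw [interior_Icc] at hs
        have hs0 : s ∈ Ici (0:ℝ) := hs.1.le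
        have h1 : y' s ≤ c * Real.exp (-δ * s) * x s := hy' s hs0
        have h2 : x s ≤ 1 + C₀ * s := hxbound s hs0
        have h3 : Real.exp (-δ * s) ≤ 1 := by
          apply Real.exp_le_one_iff.mpr; nlinarith [hs.1]
        have hxs : 0 ≤ x s := hxnn s hs0
        have h4 : x s ≤ 1 + C₀ := by nlinarith [hs.2, hC₀pos]
        have h5 : c * Real.exp (-δ * s) * x s ≤ c * x s := by
          nlinarith [mul_nonneg (mul_nonneg hc.le hxs) (sub_nonneg.mpr h3)]
        have : y' s ≤ c * (1 + C₀) := by nlinarith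
        simp only [hC₁]; linarith
    have := hhanti (by constructor <;> norm_num) ht ht.1
    simp only [mul_zero, sub_zero, hy0] at this
    linarith
  -- conclude
  refine ⟨C₀ + C₁ + 1, by positivity, fun t ht => ?_⟩
  have ht' : (0:ℝ) ≤ t := ht
  constructor
  · have := hxbound t ht
    nlinarith [mul_nonneg (by linarith : (0:ℝ) ≤ C₁ + 1) ht']
  · rcases le_or_gt t 1 with h | h
    · have := hysmall t ⟨ht, h⟩
      rw [min_eq_right h]
      nlinarith [mul_nonneg (by linarith : (0:ℝ) ≤ C₀ + 1) ht']
    · have := hybound t ht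
      rw [min_eq_left h.le]
      nlinarith [hC₁pos]
end

section
/- Let x, y : [0,∞) → ℝ be nonnegative C¹ functions with x' ≤ y, y' ≤ c·e^{-δt}·x, x(0)=1, y(0)=0, c, δ > 0. Set ε = δ²/4. Then ε·x(t)² + y(t)² ≤ ε·exp(√ε·t + c/(√ε·δ)) for all t ≥ 0; in particular x(t) ≤ C·e^{δt/2} for some constant C depending on c, δ. -/
open Set

set_option maxHeartbeats 1000000 in
theorem stmt_3 (c δ : ℝ) (hc : 0 < c) (hδ : 0 < δ) (x y x' y' : ℝ → ℝ)
    (hxd : ∀ t ∈ Ici (0:ℝ), HasDerivWithinAt x (x' t) (Ici 0) t)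
    (hyd : ∀ t ∈ Ici (0:ℝ), HasDerivWithinAt y (y' t) (Ici 0) t)
    (hx'c : ContinuousOn x' (Ici 0)) (hy'c : ContinuousOn y' (Ici 0))
    (hxnn : ∀ t ∈ Ici (0:ℝ), 0 ≤ x t) (hynn : ∀ t ∈ Ici (0:ℝ), 0 ≤ y t)
    (hx0 : x 0 = 1) (hy0 : y 0 = 0)
    (hx' : ∀ t ∈ Ici (0:ℝ), x' t ≤ y t)
    (hy' : ∀ t ∈ Ici (0:ℝ), y' t ≤ c * Real.exp (-δ * t) * x t) :
    (∀ t ∈ Ici (0:ℝ),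
      (δ ^ 2 / 4) * (x t) ^ 2 + (y t) ^ 2 ≤
        (δ ^ 2 / 4) * Real.exp (Real.sqrt (δ ^ 2 / 4) * t + c / (Real.sqrt (δ ^ 2 / 4) * δ))) ∧
    ∃ C : ℝ, 0 < C ∧ ∀ t ∈ Ici (0:ℝ), x t ≤ C * Real.exp (δ * t / 2) := by
  have hs : Real.sqrt (δ ^ 2 / 4) = δ / 2 := by
    rw [show δ ^ 2 / 4 = (δ/2)^2 by ring, Real.sqrt_sq (by linarith)]
  rw [hs]
  set s : ℝ := δ / 2 with hsdef
  have hspos : 0 < s := by rw [hsdef]; linarith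
  have hεs : δ ^ 2 / 4 = s ^ 2 := by rw [hsdef]; ring
  rw [hεs]
  set K : ℝ := c / (s * δ) with hKdef
  have hKpos : 0 < K := by rw [hKdef]; positivity
  set Φ : ℝ → ℝ := fun t => s * t + K * (1 - Real.exp (-δ * t)) with hΦdef
  set g : ℝ → ℝ := fun t => s + (c / s) * Real.exp (-δ * t) with hgdef
  have hΦd : ∀ t : ℝ, HasDerivAt Φ (g t) t := by
    intro t
    have h1 : HasDerivAt (fun t : ℝ => Real.exp (-δ * t)) (Real.exp (-δ * t) * (-δ * 1)) t :=
      ((hasDerivAt_id t).const_mul (-δ)).exp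
    have h2 : HasDerivAt (fun t => s * t + K * (1 - Real.exp (-δ * t)))
        (s * 1 + K * (0 - Real.exp (-δ * t) * (-δ * 1))) t :=
      ((hasDerivAt_id t).const_mul s).add (((hasDerivAt_const t (1:ℝ)).sub h1).const_mul K)
    convert h2 using 1
    rw [hgdef, hKdef]
    field_simp
    ring
  set E : ℝ → ℝ := fun t => s ^ 2 * x t ^ 2 + y t ^ 2 with hEdef
  set E' : ℝ → ℝ := fun t => s ^ 2 * (2 * x t * x' t) + 2 * y t * y' t with hE'def
  have hEd : ∀ t ∈ Ici (0:ℝ), HasDerivWithinAt E (E' t) (Ici 0) t := by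
    intro t ht
    have := (((hxd t ht).pow 2).const_mul (s ^ 2)).add ((hyd t ht).pow 2)
    have hfun : E = (fun y => s ^ 2 * (x ^ 2) y) + y ^ 2 := by
      funext u; simp [hEdef]
    rw [hfun]
    refine this.congr_deriv ?_
    rw [hE'def]
    norm_num
  set F : ℝ → ℝ := fun t => E t * Real.exp (-Φ t) with hFdef
  set F' : ℝ → ℝ := fun t => E' t * Real.exp (-Φ t) + E t * (Real.exp (-Φ t) * (-(g t))) with hF'def
  have hFd : ∀ t ∈ Ici (0:ℝ), HasDerivWithinAt F (F' t) (Ici 0) t := by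
    intro t ht
    exact (hEd t ht).mul ((hΦd t).neg.exp.hasDerivWithinAt)
  have hF'np : ∀ t ∈ Ici (0:ℝ), F' t ≤ 0 := by
    intro t ht
    have hex : (0:ℝ) < Real.exp (-δ * t) := Real.exp_pos _
    have hxx : x' t ≤ y t := hx' t ht
    have hyy : y' t ≤ c * Real.exp (-δ * t) * x t := hy' t ht
    have hxn := hxnn t ht
    have hyn := hynn t ht
    have h1 : E' t ≤ g t * E t := by
      have hsg : s * g t = s ^ 2 + c * Real.exp (-δ * t) := by
        rw [hgdef]; field_simp
      have key1 : (0:ℝ) ≤ s ^ 2 * (s * x t - y t) ^ 2 := by positivity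
      have key2 : (0:ℝ) ≤ c * Real.exp (-δ * t) * (s * x t - y t) ^ 2 := by positivity
      have m1 : s ^ 3 * (2 * x t) * x' t ≤ s ^ 3 * (2 * x t) * y t :=
        mul_le_mul_of_nonneg_left hxx (by positivity)
      have m2 : s * (2 * y t) * y' t ≤ s * (2 * y t) * (c * Real.exp (-δ * t) * x t) :=
        mul_le_mul_of_nonneg_left hyy (by positivity)
      have P : s * E' t ≤ s * (g t * E t) := by
        rw [← mul_assoc, hsg, hE'def, hEdef]
        simp only
        nlinarith [key1, key2, m1, m2]
      exact le_of_mul_le_mul_left P hspos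
    have hexp : (0:ℝ) < Real.exp (-Φ t) := Real.exp_pos _
    have h2 : Real.exp (-Φ t) * (E' t - g t * E t) ≤ 0 :=
      mul_nonpos_of_nonneg_of_nonpos hexp.le (sub_nonpos.mpr h1)
    rw [hF'def]
    simp only
    nlinarith [h2]
  have hFcont : ContinuousOn F (Ici 0) := fun t ht => (hFd t ht).continuousWithinAt
  have hanti : AntitoneOn F (Ici 0) := by
    apply antitoneOn_of_deriv_nonpos (convex_Ici 0) hFcont
    · intro t ht
      rw [interior_Ici] at ht
      exact ((hFd t (mem_Ici.mpr (mem_Ioi.mp ht).le)).hasDerivAt (Ici_mem_nhds ht)).differentiableAt.differentiableWithinAt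
    · intro t ht
      rw [interior_Ici] at ht
      rw [((hFd t (mem_Ici.mpr (mem_Ioi.mp ht).le)).hasDerivAt (Ici_mem_nhds ht)).deriv]
      exact hF'np t (mem_Ici.mpr (mem_Ioi.mp ht).le)
  have hΦ0 : Φ 0 = 0 := by simp [hΦdef]
  have hF0 : F 0 = s ^ 2 := by simp [hFdef, hEdef, hΦ0, hx0, hy0]
  have hEbound : ∀ t ∈ Ici (0:ℝ), E t ≤ s ^ 2 * Real.exp (s * t + K) := by
    intro t ht
    have h1 : F t ≤ s ^ 2 := by
      have := hanti (self_mem_Ici) ht ht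
      rwa [hF0] at this
    have h2 : E t ≤ s ^ 2 * Real.exp (Φ t) := by
      rw [hFdef] at h1
      simp only at h1
      calc E t = E t * Real.exp (-Φ t) * Real.exp (Φ t) := by
            rw [mul_assoc, ← Real.exp_add]; simp
        _ ≤ s ^ 2 * Real.exp (Φ t) := mul_le_mul_of_nonneg_right h1 (Real.exp_pos _).le
    refine h2.trans ?_
    have hεpos : (0:ℝ) < s ^ 2 := by positivity
    apply mul_le_mul_of_nonneg_left _ hεpos.le
    apply Real.exp_le_exp.mpr
    rw [hΦdef]
    simp only
    have hh : 0 < Real.exp (-δ * t) := Real.exp_pos _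
    nlinarith [hKpos, hh]
  constructor
  · intro t ht
    have := hEbound t ht
    rw [hEdef] at this
    simpa using this
  · refine ⟨Real.exp (K / 2), Real.exp_pos _, fun t ht => ?_⟩
    have hE := hEbound t ht
    have hxn := hxnn t ht
    have hx2 : x t ^ 2 ≤ Real.exp (s * t + K) := by
      have hy2 : 0 ≤ y t ^ 2 := sq_nonneg _
      rw [hEdef] at hE
      simp only at hE
      have h : s ^ 2 * x t ^ 2 ≤ s ^ 2 * Real.exp (s * t + K) := by linarith
      exact le_of_mul_le_mul_left h (pow_pos hspos 2)
    have hA : (0:ℝ) < Real.exp ((s * t + K) / 2) := Real.exp_pos _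
    have hA2 : Real.exp ((s * t + K) / 2) * Real.exp ((s * t + K) / 2) = Real.exp (s * t + K) := by
      rw [← Real.exp_add]; ring_nf
    have hxA : x t ≤ Real.exp ((s * t + K) / 2) := by
      nlinarith [sq_nonneg (x t - Real.exp ((s * t + K) / 2))]
    refine hxA.trans ?_
    rw [← Real.exp_add]
    apply Real.exp_le_exp.mpr
    have ht0 : (0:ℝ) ≤ t := ht
    rw [hsdef]
    nlinarith [mul_nonneg hδ.le ht0]
end

section
/- Let x, y, z : [0,∞) → ℝ be nonnegative C¹ functions satisfying x' ≤ y, y' ≤ c·e^{-δt}(x + y) + c·z, z' ≤ c·e^{-δt}·x, with x(0)=1, y(0)=0, z(0)=0, for constants c, δ > 0. Then there exists C = C(c, δ) such that x(t) ≤ 1 + C·t², y(t) ≤ C·t, and z(t) ≤ C·min(1, t) for all t ≥ 0. -/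
open Set

lemma comp_aux {t : ℝ} (ht : 0 ≤ t) {f g f' g' : ℝ → ℝ}
    (hf : ∀ s ∈ Icc (0:ℝ) t, HasDerivWithinAt f (f' s) (Icc 0 t) s)
    (hg : ∀ s ∈ Icc (0:ℝ) t, HasDerivWithinAt g (g' s) (Icc 0 t) s)
    (hle : ∀ s ∈ Icc (0:ℝ) t, f' s ≤ g' s) :
    f t - f 0 ≤ g t - g 0 := by
  have hmono : MonotoneOn (fun s => g s - f s) (Icc 0 t) := by
    apply monotoneOn_of_hasDerivWithinAt_nonneg (convex_Icc 0 t)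
      (f' := fun s => g' s - f' s)
    · exact fun s hs => ((hg s hs).sub (hf s hs)).continuousWithinAt
    · intro s hs
      exact ((hg s (interior_subset hs)).sub (hf s (interior_subset hs))).mono interior_subset
    · intro s hs
      have := hle s (interior_subset hs); linarith
  have h := hmono (left_mem_Icc.2 ht) (right_mem_Icc.2 ht) ht
  simp only at h
  linarith

lemma integ {t : ℝ} (ht : 0 ≤ t) {f g f' g' : ℝ → ℝ}
    (hf : ∀ s ∈ Ici (0:ℝ), HasDerivWithinAt f (f' s) (Ici 0) s)
    (hg : ∀ s : ℝ, HasDerivAt g (g' s) s)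
    (hle : ∀ s ∈ Icc (0:ℝ) t, f' s ≤ g' s) :
    f t ≤ f 0 + (g t - g 0) := by
  have := comp_aux ht (fun s hs => (hf s hs.1).mono Icc_subset_Ici_self)
    (fun s _ => (hg s).hasDerivWithinAt) hle
  linarith

lemma hexp (a s : ℝ) : HasDerivAt (fun r => Real.exp (a * r)) (a * Real.exp (a * s)) s := by
  simpa [mul_comm] using ((hasDerivAt_id s).const_mul a).exp

noncomputable def Gf (β : ℝ) (s : ℝ) : ℝ :=
  -Real.exp (-β * s) * ((1 + s) ^ 2 / β + 2 * (1 + s) / β ^ 2 + 2 / β ^ 3)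

lemma hGf (β : ℝ) (hβ : 0 < β) (s : ℝ) :
    HasDerivAt (Gf β) (Real.exp (-β * s) * (1 + s) ^ 2) s := by
  have h1 : HasDerivAt (fun r : ℝ => -Real.exp (-β * r)) (β * Real.exp (-β * s)) s := by
    exact (hexp (-β) s).neg.congr_deriv (by ring)
  have h2 : HasDerivAt (fun r : ℝ => (1 + r) ^ 2 / β + 2 * (1 + r) / β ^ 2 + 2 / β ^ 3)
      (2 * (1 + s) / β + 2 / β ^ 2) s := by
    have ha : HasDerivAt (fun r : ℝ => (1 : ℝ) + r) 1 s := (hasDerivAt_id s).const_add 1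
    have hb := (ha.pow 2).div_const β
    have hc := (ha.const_mul 2).div_const (β ^ 2)
    have hd := (hb.add hc).add_const (2 / β ^ 3)
    refine hd.congr_deriv ?_
    ring
  have := h1.mul h2
  refine this.congr_deriv ?_
  have hβ' : β ≠ 0 := ne_of_gt hβ
  field_simp
  ring

lemma Gf_nonpos (β : ℝ) (hβ : 0 < β) {s : ℝ} (hs : 0 ≤ s) : Gf β s ≤ 0 := by
  unfold Gf
  have := Real.exp_pos (-β * s)
  have h1 : 0 ≤ (1 + s) ^ 2 / β := by positivity
  have h2 : 0 ≤ 2 * (1 + s) / β ^ 2 := by positivity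
  have h3 : 0 ≤ 2 / β ^ 3 := by positivity
  nlinarith

lemma Gf_zero (β : ℝ) : Gf β 0 = -(1 / β + 2 / β ^ 2 + 2 / β ^ 3) := by
  simp [Gf]

set_option maxHeartbeats 2000000 in
theorem stmt_4 (c δ : ℝ) (hc : 0 < c) (hδ : 0 < δ) (x y z x' y' z' : ℝ → ℝ)
    (hxd : ∀ t ∈ Ici (0:ℝ), HasDerivWithinAt x (x' t) (Ici 0) t)
    (hyd : ∀ t ∈ Ici (0:ℝ), HasDerivWithinAt y (y' t) (Ici 0) t)
    (hzd : ∀ t ∈ Ici (0:ℝ), HasDerivWithinAt z (z' t) (Ici 0) t)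
    (hx'c : ContinuousOn x' (Ici 0)) (hy'c : ContinuousOn y' (Ici 0))
    (hz'c : ContinuousOn z' (Ici 0))
    (hxnn : ∀ t ∈ Ici (0:ℝ), 0 ≤ x t) (hynn : ∀ t ∈ Ici (0:ℝ), 0 ≤ y t)
    (hznn : ∀ t ∈ Ici (0:ℝ), 0 ≤ z t)
    (hx0 : x 0 = 1) (hy0 : y 0 = 0) (hz0 : z 0 = 0)
    (hx' : ∀ t ∈ Ici (0:ℝ), x' t ≤ y t)
    (hy' : ∀ t ∈ Ici (0:ℝ), y' t ≤ c * Real.exp (-δ * t) * (x t + y t) + c * z t)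
    (hz' : ∀ t ∈ Ici (0:ℝ), z' t ≤ c * Real.exp (-δ * t) * x t) :
    ∃ C : ℝ, 0 < C ∧ ∀ t ∈ Ici (0:ℝ),
      x t ≤ 1 + C * t ^ 2 ∧ y t ≤ C * t ∧ z t ≤ C * min 1 t := by
  -- crude exponential bound
  have crude : ∀ r ∈ Ici (0:ℝ), x r + y r + z r ≤ Real.exp ((1 + 2*c) * r) := by
    intro r hr
    have hφd : ∀ s ∈ Ici (0:ℝ), HasDerivWithinAt
        (fun p => (x p + y p + z p) * Real.exp (-(1 + 2*c) * p))
        ((x' s + y' s + z' s) * Real.exp (-(1 + 2*c) * s)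
          + (x s + y s + z s) * (-(1 + 2*c) * Real.exp (-(1 + 2*c) * s))) (Ici 0) s :=
      fun s hs => (((hxd s hs).add (hyd s hs)).add (hzd s hs)).mul
        ((hexp (-(1 + 2*c)) s).hasDerivWithinAt)
    have hineq : ∀ s ∈ Icc (0:ℝ) r,
        (x' s + y' s + z' s) * Real.exp (-(1 + 2*c) * s)
          + (x s + y s + z s) * (-(1 + 2*c) * Real.exp (-(1 + 2*c) * s)) ≤ 0 := by
      intro s hs
      have hs0 : s ∈ Ici (0:ℝ) := hs.1
      have e1 : Real.exp (-δ * s) ≤ 1 := Real.exp_le_one_iff.2 (by nlinarith [hs.1])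
      have hxn := hxnn s hs0; have hyn := hynn s hs0; have hzn := hznn s hs0
      have hsum : x' s + y' s + z' s ≤ (1 + 2*c) * (x s + y s + z s) := by
        have h1 := hx' s hs0; have h2 := hy' s hs0; have h3 := hz' s hs0
        have hne : c * Real.exp (-δ * s) * (x s + y s) ≤ c * (x s + y s) :=
          mul_le_mul_of_nonneg_right (mul_le_of_le_one_right hc.le e1) (by linarith)
        have hne2 : c * Real.exp (-δ * s) * x s ≤ c * x s :=
          mul_le_mul_of_nonneg_right (mul_le_of_le_one_right hc.le e1) hxn
        nlinarith [mul_nonneg hc.le hyn, mul_nonneg hc.le hzn]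
      have ep := Real.exp_pos (-(1 + 2*c) * s)
      nlinarith [mul_le_mul_of_nonneg_right hsum ep.le]
    have key := integ (g := fun _ => (0:ℝ)) (g' := fun _ => (0:ℝ)) hr hφd
      (fun s => hasDerivAt_const s 0) hineq
    simp only [hx0, hy0, hz0, mul_zero, neg_zero, Real.exp_zero, mul_one, sub_zero,
      add_zero, zero_add, sub_self] at key
    have key2 := (le_div_iff₀ (Real.exp_pos (-(1 + 2*c) * r))).mpr key
    have h2 : (1:ℝ) / Real.exp (-(1 + 2*c) * r) = Real.exp ((1 + 2*c) * r) := by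
      rw [eq_comm, eq_div_iff (Real.exp_pos (-(1 + 2*c) * r)).ne', ← Real.exp_add,
        show (1 + 2*c) * r + -(1 + 2*c) * r = 0 by ring, Real.exp_zero]
    rw [h2] at key2
    exact key2
  -- continuity of x, y, z
  have hxc : ContinuousOn x (Ici 0) := fun s hs => (hxd s hs).continuousWithinAt
  have hyc : ContinuousOn y (Ici 0) := fun s hs => (hyd s hs).continuousWithinAt
  have hzc : ContinuousOn z (Ici 0) := fun s hs => (hzd s hs).continuousWithinAt
  -- constants
  obtain ⟨β, hβ, hβδ⟩ : ∃ β : ℝ, 0 < β ∧ δ = 2 * β := ⟨δ/2, by positivity, by ring⟩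
  obtain ⟨Q, hQ, hQdef⟩ : ∃ Q : ℝ, 0 < Q ∧ Q = 1/β + 2/β^2 + 2/β^3 :=
    ⟨1/β + 2/β^2 + 2/β^3, by positivity, rfl⟩
  obtain ⟨η, hη, hηc⟩ : ∃ η : ℝ, 0 < η ∧ (2 + c) * η = 1/2 :=
    ⟨1/(2*(2+c)), by positivity, by field_simp⟩
  obtain ⟨T, hT, hTε⟩ : ∃ T : ℝ, 0 ≤ T ∧ c * Q * Real.exp (-β * T) ≤ η := by
    refine ⟨max 0 (Real.log (c*Q/η)/β), le_max_left _ _, ?_⟩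
    have hpos : 0 < c*Q/η := by positivity
    have h1 : Real.log (c*Q/η) ≤ β * max 0 (Real.log (c*Q/η)/β) := by
      have h := le_max_right 0 (Real.log (c*Q/η)/β)
      calc Real.log (c*Q/η) = β * (Real.log (c*Q/η)/β) := by field_simp
        _ ≤ β * max 0 (Real.log (c*Q/η)/β) := mul_le_mul_of_nonneg_left h hβ.le
    have h2 : Real.exp (-β * max 0 (Real.log (c*Q/η)/β))
        ≤ Real.exp (-(Real.log (c*Q/η))) := Real.exp_le_exp.mpr (by linarith)
    have h3 : Real.exp (-(Real.log (c*Q/η))) = η/(c*Q) := by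
      rw [Real.exp_neg, Real.exp_log hpos, inv_div]
    calc c*Q*Real.exp (-β * max 0 (Real.log (c*Q/η)/β)) ≤ c*Q*(η/(c*Q)) :=
          mul_le_mul_of_nonneg_left (h2.trans h3.le) (by positivity)
      _ = η := by field_simp
  obtain ⟨E, hE1, hEbd⟩ : ∃ E : ℝ, 1 ≤ E ∧ ∀ r, 0 ≤ r → r ≤ T → x r + y r + z r ≤ E := by
    refine ⟨Real.exp ((1+2*c)*T), Real.one_le_exp (by positivity), fun r h0 hrT => ?_⟩
    exact (crude r h0).trans (Real.exp_le_exp.mpr (by nlinarith))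
  have hEpos : 0 < E := lt_of_lt_of_le one_pos hE1
  -- the self-improving bound
  have main : ∀ t ∈ Ici (0:ℝ),
      x t ≤ (2 + 2*(2+c)*(c*E/δ)) * (1+t)^2 ∧ y t ≤ (2 + 2*(2+c)*(c*E/δ)) * (1+t)
        ∧ z t ≤ 2 + 2*(2+c)*(c*E/δ) := by
    intro t ht
    have hwc : ContinuousOn (fun s => max (x s / (1+s)^2) (max (y s / (1+s)) (z s)))
        (Icc 0 t) := by
      have hsub : Icc (0:ℝ) t ⊆ Ici 0 := Icc_subset_Ici_self
      have hx2 : ContinuousOn (fun s : ℝ => x s / (1+s)^2) (Icc 0 t) :=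
        (hxc.mono hsub).div ((continuousOn_const.add continuousOn_id).pow 2)
          (fun s hs => by nlinarith [hs.1])
      have hy2 : ContinuousOn (fun s : ℝ => y s / (1+s)) (Icc 0 t) :=
        (hyc.mono hsub).div (continuousOn_const.add continuousOn_id)
          (fun s hs => by linarith [hs.1])
      exact hx2.sup (hy2.sup (hzc.mono hsub))
    obtain ⟨a, haI, hamax0⟩ := isCompact_Icc.exists_isMaxOn (nonempty_Icc.mpr ht) hwc
    obtain ⟨W, hWdef⟩ : ∃ W : ℝ, W = max (x a / (1+a)^2) (max (y a / (1+a)) (z a)) :=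
      ⟨_, rfl⟩
    have hamax : ∀ s ∈ Icc (0:ℝ) t,
        max (x s / (1+s)^2) (max (y s / (1+s)) (z s)) ≤ W := fun s hs => by
      rw [hWdef]; exact isMaxOn_iff.mp hamax0 s hs
    have hW1 : 1 ≤ W := by
      have h0 : (0:ℝ) ∈ Icc 0 t := left_mem_Icc.mpr ht
      have hle := hamax 0 h0
      have hx00 : (1:ℝ) ≤ x 0 / (1+0)^2 := by rw [hx0]; norm_num
      exact hx00.trans ((le_max_left _ _).trans hle)
    have hWpos : 0 < W := by linarith
    have hxW : ∀ s ∈ Icc (0:ℝ) t, x s ≤ W * (1+s)^2 := by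
      intro s hs
      have h := (le_max_left _ _).trans (hamax s hs)
      rwa [div_le_iff₀ (by nlinarith [hs.1] : (0:ℝ) < (1+s)^2)] at h
    have hyW : ∀ s ∈ Icc (0:ℝ) t, y s ≤ W * (1+s) := by
      intro s hs
      have h := ((le_max_left _ _).trans (le_max_right _ _)).trans (hamax s hs)
      rwa [div_le_iff₀ (by linarith [hs.1] : (0:ℝ) < 1+s)] at h
    have hzW : ∀ s ∈ Icc (0:ℝ) t, z s ≤ W := fun s hs =>
      ((le_max_right _ _).trans (le_max_right _ _)).trans (hamax s hs)
    -- pointwise majorants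
    have hxM : ∀ r ∈ Icc (0:ℝ) t, x r ≤ E + W * (1+r)^2 * Real.exp (β*(r-T)) := by
      intro r hr
      rcases le_or_gt r T with h | h
      · have hcr := hEbd r hr.1 h
        have hyn := hynn r hr.1; have hzn := hznn r hr.1
        have h2 : 0 ≤ W * (1+r)^2 * Real.exp (β*(r-T)) := by positivity
        linarith
      · have h1 := hxW r hr
        have he : 1 ≤ Real.exp (β*(r-T)) := Real.one_le_exp (mul_nonneg hβ.le (by linarith))
        linarith [mul_le_mul_of_nonneg_left he
          (show (0:ℝ) ≤ W*(1+r)^2 by positivity), hEpos]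
    have hyM : ∀ r ∈ Icc (0:ℝ) t, y r ≤ E + W * (1+r)^2 * Real.exp (β*(r-T)) := by
      intro r hr
      rcases le_or_gt r T with h | h
      · have hcr := hEbd r hr.1 h
        have hxn := hxnn r hr.1; have hzn := hznn r hr.1
        have h2 : 0 ≤ W * (1+r)^2 * Real.exp (β*(r-T)) := by positivity
        linarith
      · have h1 := hyW r hr
        have he : 1 ≤ Real.exp (β*(r-T)) := Real.one_le_exp (mul_nonneg hβ.le (by linarith))
        have h2 : W*(1+r) ≤ W*(1+r)^2 := by
          nlinarith [mul_nonneg (mul_nonneg hWpos.le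
            (by linarith [hr.1] : (0:ℝ) ≤ 1+r)) hr.1]
        linarith [mul_le_mul_of_nonneg_left he
          (show (0:ℝ) ≤ W*(1+r)^2 by positivity), hEpos]
    have hδne : δ ≠ 0 := ne_of_gt hδ
    have hsplit : ∀ r : ℝ, Real.exp (-δ*r) * Real.exp (β*(r-T))
        = Real.exp (-β*T) * Real.exp (-β*r) := by
      intro r
      rw [← Real.exp_add, ← Real.exp_add]
      congr 1
      rw [hβδ]; ring
    -- z estimate
    have hzZ : ∀ s ∈ Icc (0:ℝ) t, z s ≤ c*E/δ + η*W := by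
      intro s hs
      have hGd : ∀ r : ℝ, HasDerivAt
          (fun p => (c*E/δ) * (1 - Real.exp (-δ*p)) + (c*W*Real.exp (-β*T)) * Gf β p)
          (c*E*Real.exp (-δ*r) + (c*W*Real.exp (-β*T)) * (Real.exp (-β*r)*(1+r)^2)) r := by
        intro r
        have h1 : HasDerivAt (fun p : ℝ => 1 - Real.exp (-δ*p)) (δ * Real.exp (-δ*r)) r := by
          have := ((hexp (-δ) r).const_sub 1)
          refine this.congr_deriv ?_
          ring
        have h2 := (h1.const_mul (c*E/δ)).add ((hGf β hβ r).const_mul (c*W*Real.exp (-β*T)))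
        refine h2.congr_deriv ?_
        field_simp
      have hineq : ∀ r ∈ Icc (0:ℝ) s, z' r ≤
          c*E*Real.exp (-δ*r) + (c*W*Real.exp (-β*T)) * (Real.exp (-β*r)*(1+r)^2) := by
        intro r hrs
        have hrt : r ∈ Icc 0 t := ⟨hrs.1, le_trans hrs.2 hs.2⟩
        have h1 := hz' r hrs.1
        have h2 := hxM r hrt
        have e0 : (0:ℝ) < Real.exp (-δ*r) := Real.exp_pos _
        calc z' r ≤ c * Real.exp (-δ*r) * x r := h1
          _ ≤ c * Real.exp (-δ*r) * (E + W*(1+r)^2*Real.exp (β*(r-T))) :=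
              mul_le_mul_of_nonneg_left h2 (by positivity)
          _ = c*E*Real.exp (-δ*r)
              + (c*W*Real.exp (-β*T)) * (Real.exp (-β*r)*(1+r)^2) := by
            have h3 := hsplit r
            linear_combination (c * W * (1+r)^2) * h3
      have key := integ hs.1 hzd hGd hineq
      rw [hz0] at key
      have hG0 : Gf β 0 = -Q := by rw [Gf_zero, hQdef]
      rw [hG0] at key
      simp only [mul_zero, neg_zero, Real.exp_zero, sub_self, sub_zero, zero_add] at key
      have hGs := Gf_nonpos β hβ hs.1
      have hA : (c*E/δ) * (1 - Real.exp (-δ*s)) ≤ c*E/δ := by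
        have h5 : 0 < c*E/δ := by positivity
        nlinarith [Real.exp_pos (-δ*s)]
      have hB : (c*W*Real.exp (-β*T)) * Gf β s ≤ 0 :=
        mul_nonpos_of_nonneg_of_nonpos (by positivity) hGs
      have hCq : (c*W*Real.exp (-β*T)) * Q ≤ η * W := by
        have h6 := mul_le_mul_of_nonneg_right hTε hWpos.le
        nlinarith [h6]
      nlinarith [key, hA, hB, hCq]
    -- y estimate
    have hyB : ∀ s ∈ Icc (0:ℝ) t,
        y s ≤ (2*(c*E/δ) + 2*(η*W) + c*(c*E/δ + η*W)) * (1+s) := by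
      intro s hs
      have hGd : ∀ r : ℝ, HasDerivAt
          (fun p => (2*(c*E/δ)) * (1 - Real.exp (-δ*p))
            + (2*(c*W*Real.exp (-β*T))) * Gf β p + (c*(c*E/δ + η*W)) * p)
          (2*(c*E)*Real.exp (-δ*r) + (2*(c*W*Real.exp (-β*T))) * (Real.exp (-β*r)*(1+r)^2)
            + c*(c*E/δ + η*W)) r := by
        intro r
        have h1 : HasDerivAt (fun p : ℝ => 1 - Real.exp (-δ*p)) (δ * Real.exp (-δ*r)) r := by
          have := ((hexp (-δ) r).const_sub 1)
          refine this.congr_deriv ?_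
          ring
        have h2 := ((h1.const_mul (2*(c*E/δ))).add
          ((hGf β hβ r).const_mul (2*(c*W*Real.exp (-β*T))))).add
          ((hasDerivAt_id r).const_mul (c*(c*E/δ + η*W)))
        refine h2.congr_deriv ?_
        field_simp
      have hineq : ∀ r ∈ Icc (0:ℝ) s, y' r ≤
          2*(c*E)*Real.exp (-δ*r) + (2*(c*W*Real.exp (-β*T))) * (Real.exp (-β*r)*(1+r)^2)
            + c*(c*E/δ + η*W) := by
        intro r hrs
        have hrt : r ∈ Icc 0 t := ⟨hrs.1, le_trans hrs.2 hs.2⟩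
        have h1 := hy' r hrs.1
        have h2 := hxM r hrt
        have h3 := hyM r hrt
        have h4 := hzZ r hrt
        have e0 : (0:ℝ) < Real.exp (-δ*r) := Real.exp_pos _
        have h5 : c * Real.exp (-δ*r) * (x r + y r)
            ≤ c * Real.exp (-δ*r) * (2*E + 2*(W*(1+r)^2*Real.exp (β*(r-T)))) :=
          mul_le_mul_of_nonneg_left (by linarith) (by positivity)
        have h6 : c * z r ≤ c * (c*E/δ + η*W) := mul_le_mul_of_nonneg_left h4 hc.le
        have h8 : c * Real.exp (-δ*r) * (2*E + 2*(W*(1+r)^2*Real.exp (β*(r-T))))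
            = 2*(c*E)*Real.exp (-δ*r)
              + (2*(c*W*Real.exp (-β*T))) * (Real.exp (-β*r)*(1+r)^2) := by
          linear_combination (2 * c * W * (1+r)^2) * hsplit r
        linarith
      have key := integ hs.1 hyd hGd hineq
      rw [hy0] at key
      have hG0 : Gf β 0 = -Q := by rw [Gf_zero, hQdef]
      rw [hG0] at key
      simp only [mul_zero, neg_zero, Real.exp_zero, sub_self, sub_zero, zero_add] at key
      have hGs := Gf_nonpos β hβ hs.1
      have hA : (2*(c*E/δ)) * (1 - Real.exp (-δ*s)) ≤ 2*(c*E/δ) := by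
        have h5 : 0 < c*E/δ := by positivity
        nlinarith [Real.exp_pos (-δ*s)]
      have hB : (2*(c*W*Real.exp (-β*T))) * Gf β s ≤ 0 :=
        mul_nonpos_of_nonneg_of_nonpos (by positivity) hGs
      have hCq : (2*(c*W*Real.exp (-β*T))) * Q ≤ 2*(η*W) := by
        have h6 := mul_le_mul_of_nonneg_right hTε hWpos.le
        nlinarith [h6]
      have hK1 : 0 ≤ 2*(c*E/δ) + 2*(η*W) := by positivity
      have hBnn : 0 ≤ c*(c*E/δ + η*W) := by positivity
      nlinarith [key, hA, hB, hCq, mul_nonneg hK1 hs.1, hBnn]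
    -- x estimate
    have hxB : ∀ s ∈ Icc (0:ℝ) t,
        x s ≤ 1 + (2*(c*E/δ) + 2*(η*W) + c*(c*E/δ + η*W)) * (s + s^2/2) := by
      intro s hs
      have hGd : ∀ r : ℝ, HasDerivAt
          (fun p => (2*(c*E/δ) + 2*(η*W) + c*(c*E/δ + η*W)) * (p + p^2/2))
          ((2*(c*E/δ) + 2*(η*W) + c*(c*E/δ + η*W)) * (1 + r)) r := by
        intro r
        have h1 : HasDerivAt (fun p : ℝ => p + p^2/2) (1 + r) r := by
          have h2 := (hasDerivAt_id r).add ((hasDerivAt_pow 2 r).div_const 2)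
          refine h2.congr_deriv ?_
          ring
        exact h1.const_mul _
      have hineq : ∀ r ∈ Icc (0:ℝ) s, x' r ≤
          (2*(c*E/δ) + 2*(η*W) + c*(c*E/δ + η*W)) * (1 + r) := by
        intro r hrs
        have hrt : r ∈ Icc 0 t := ⟨hrs.1, le_trans hrs.2 hs.2⟩
        exact (hx' r hrs.1).trans (hyB r hrt)
      have key := integ hs.1 hxd hGd hineq
      rw [hx0] at key
      norm_num at key
      linarith [key]
    -- close the loop
    have hWle : W ≤ 2 + 2*(2+c)*(c*E/δ) := by
      have h1 := hxB a haI
      have h2 := hyB a haI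
      have h3 := hzZ a haI
      have ha0 : 0 ≤ a := haI.1
      have hden : (0:ℝ) < (1+a)^2 := by nlinarith
      have hBnn : 0 ≤ 2*(c*E/δ) + 2*(η*W) + c*(c*E/δ + η*W) := by positivity
      have hxa : x a / (1+a)^2 ≤ 1 + (2*(c*E/δ) + 2*(η*W) + c*(c*E/δ + η*W)) := by
        rw [div_le_iff₀ hden]
        nlinarith [h1, mul_nonneg hBnn ha0, mul_nonneg (mul_nonneg hBnn ha0) ha0,
          sq_nonneg a]
      have hya : y a / (1+a) ≤ 2*(c*E/δ) + 2*(η*W) + c*(c*E/δ + η*W) := by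
        rw [div_le_iff₀ (by linarith : (0:ℝ) < 1+a)]
        linarith [h2]
      have hza : z a ≤ 1 + (2*(c*E/δ) + 2*(η*W) + c*(c*E/δ + η*W)) := by
        have hp1 : 0 ≤ c*E/δ := by positivity
        have hp2 : 0 ≤ η*W := by positivity
        have hp3 : 0 ≤ c*(c*E/δ + η*W) := by positivity
        linarith [h3]
      have hWb : W ≤ 1 + (2*(c*E/δ) + 2*(η*W) + c*(c*E/δ + η*W)) :=
        le_of_eq_of_le hWdef
          (max_le hxa (max_le (hya.trans (by linarith)) hza))
      have h4 : 2*(η*W) + c*(η*W) = W/2 := by linear_combination W * hηc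
      nlinarith [hWb, h4]
    have ht0 : (0:ℝ) ≤ t := ht
    have htI : t ∈ Icc (0:ℝ) t := right_mem_Icc.mpr ht0
    refine ⟨?_, ?_, ?_⟩
    · have h := hxW t htI
      have h2 : (0:ℝ) ≤ (1+t)^2 := by positivity
      nlinarith [mul_le_mul_of_nonneg_right hWle h2]
    · have h := hyW t htI
      have h2 : (0:ℝ) ≤ 1+t := by linarith
      nlinarith [mul_le_mul_of_nonneg_right hWle h2]
    · exact (hzW t htI).trans hWle
  obtain ⟨M, hM2, hMb⟩ : ∃ M : ℝ, 2 ≤ M ∧ ∀ t ∈ Ici (0:ℝ),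
      x t ≤ M*(1+t)^2 ∧ y t ≤ M*(1+t) ∧ z t ≤ M := by
    refine ⟨2 + 2*(2+c)*(c*E/δ), ?_, main⟩
    have : 0 ≤ 2*(2+c)*(c*E/δ) := by positivity
    linarith
  have hM0 : (0:ℝ) ≤ M := by linarith
  refine ⟨(7*c+2)*M, mul_pos (by linarith) (by linarith), ?_⟩
  -- final bound for y
  have hyfin : ∀ t ∈ Ici (0:ℝ), y t ≤ (7*c+2)*M*t := by
    intro t ht
    have ht0 : (0:ℝ) ≤ t := ht
    have hGd : ∀ r : ℝ, HasDerivAt (fun p => 3*c*M*(p + p^2 + p^3/3))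
        (3*c*M*((1+r)^2)) r := by
      intro r
      have h1 : HasDerivAt (fun p : ℝ => p + p^2 + p^3/3) (1 + 2*r + r^2) r := by
        have h2 := ((hasDerivAt_id r).add (hasDerivAt_pow 2 r)).add
          ((hasDerivAt_pow 3 r).div_const 3)
        refine h2.congr_deriv ?_
        ring
      have h3 := h1.const_mul (3*c*M)
      refine h3.congr_deriv ?_
      ring
    have hineq : ∀ r ∈ Icc (0:ℝ) t, y' r ≤ 3*c*M*((1+r)^2) := by
      intro r hrs
      have hr0 : r ∈ Ici (0:ℝ) := hrs.1
      obtain ⟨m1, m2, m3⟩ := hMb r hr0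
      have h1 := hy' r hr0
      have e1 : Real.exp (-δ*r) ≤ 1 := Real.exp_le_one_iff.2 (by nlinarith [hrs.1])
      have hxn := hxnn r hr0; have hyn := hynn r hr0
      have h5 : c * Real.exp (-δ*r) * (x r + y r) ≤ c * (x r + y r) :=
        mul_le_mul_of_nonneg_right (mul_le_of_le_one_right hc.le e1) (by linarith)
      have h6 : c * (x r + y r) ≤ c * (M*(1+r)^2 + M*(1+r)) :=
        mul_le_mul_of_nonneg_left (by linarith) hc.le
      have h7 : c * z r ≤ c * M := mul_le_mul_of_nonneg_left m3 hc.le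
      have h8 : (1:ℝ)+r ≤ (1+r)^2 := by nlinarith [hrs.1]
      have h9 : (1:ℝ) ≤ (1+r)^2 := by nlinarith [hrs.1]
      have hcM : 0 ≤ c*M := mul_nonneg hc.le hM0
      nlinarith [h1, h5, h6, h7, mul_nonneg hcM (sub_nonneg.2 h8),
        mul_nonneg hcM (sub_nonneg.2 h9)]
    have key := integ ht0 hyd hGd hineq
    rw [hy0] at key
    norm_num at key
    rcases le_or_gt t 1 with h | h
    · have h2 : t^2 ≤ t := by nlinarith
      have h3 : t^3 ≤ t := by nlinarith
      have hcM : 0 ≤ c*M := mul_nonneg hc.le hM0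
      nlinarith [key, mul_nonneg hcM (sub_nonneg.2 h2), mul_nonneg hcM (sub_nonneg.2 h3),
        mul_nonneg hM0 ht0]
    · have hym := (hMb t ht).2.1
      nlinarith [hym, mul_nonneg hM0 (by linarith : (0:ℝ) ≤ t - 1),
        mul_nonneg (mul_nonneg hc.le hM0) ht0]
  intro t ht
  have ht0 : (0:ℝ) ≤ t := ht
  refine ⟨?_, hyfin t ht, ?_⟩
  · -- x bound
    have hGd : ∀ r : ℝ, HasDerivAt (fun p => (7*c+2)*M*(p^2/2)) ((7*c+2)*M*r) r := by
      intro r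
      have h1 := ((hasDerivAt_pow 2 r).div_const 2).const_mul ((7*c+2)*M)
      refine h1.congr_deriv ?_
      ring
    have hineq : ∀ r ∈ Icc (0:ℝ) t, x' r ≤ (7*c+2)*M*r := fun r hrs =>
      (hx' r hrs.1).trans (hyfin r hrs.1)
    have key := integ ht0 hxd hGd hineq
    rw [hx0] at key
    norm_num at key
    nlinarith [key, mul_nonneg (mul_nonneg (by linarith : (0:ℝ) ≤ 7*c+2) hM0)
      (sq_nonneg t)]
  · -- z bound
    rcases le_total 1 t with h | h
    · rw [min_eq_left h]
      have hzm := (hMb t ht).2.2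
      nlinarith [hzm, mul_nonneg hc.le hM0]
    · rw [min_eq_right h]
      have hGd : ∀ r : ℝ, HasDerivAt (fun p => c*M*(p + p^2 + p^3/3))
          (c*M*((1+r)^2)) r := by
        intro r
        have h1 : HasDerivAt (fun p : ℝ => p + p^2 + p^3/3) (1 + 2*r + r^2) r := by
          have h2 := ((hasDerivAt_id r).add (hasDerivAt_pow 2 r)).add
            ((hasDerivAt_pow 3 r).div_const 3)
          refine h2.congr_deriv ?_
          ring
        have h3 := h1.const_mul (c*M)
        refine h3.congr_deriv ?_
        ring
      have hineq : ∀ r ∈ Icc (0:ℝ) t, z' r ≤ c*M*((1+r)^2) := by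
        intro r hrs
        have hr0 : r ∈ Ici (0:ℝ) := hrs.1
        have m1 := (hMb r hr0).1
        have h1 := hz' r hr0
        have e1 : Real.exp (-δ*r) ≤ 1 := Real.exp_le_one_iff.2 (by nlinarith [hrs.1])
        have hxn := hxnn r hr0
        have h5 : c * Real.exp (-δ*r) * x r ≤ c * x r :=
          mul_le_mul_of_nonneg_right (mul_le_of_le_one_right hc.le e1) hxn
        have h6 : c * x r ≤ c * (M*(1+r)^2) := mul_le_mul_of_nonneg_left m1 hc.le
        nlinarith [h1, h5, h6]
      have key := integ ht0 hzd hGd hineq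
      rw [hz0] at key
      norm_num at key
      have h2 : t^2 ≤ t := by nlinarith
      have h3 : t^3 ≤ t := by nlinarith
      have hcM : 0 ≤ c*M := mul_nonneg hc.le hM0
      nlinarith [key, mul_nonneg hcM (sub_nonneg.2 h2), mul_nonneg hcM (sub_nonneg.2 h3),
        mul_nonneg hM0 ht0, mul_nonneg hcM ht0]
end

section
/- Let u, v ∈ ℝ^n be nonzero vectors and let Π be a 2-dimensional subspace of ℝ^n containing the vector u/‖u‖ - v/‖v‖ (assume u/‖u‖ ≠ v/‖v‖). Let u^Π, v^Π denote the orthogonal projections of u, v onto Π, and assume they are nonzero. Then 1 - cos∠(u,v) ≤ 1 - cos∠(u^Π, v^Π), i.e. the angle between the projections is at least the angle between the original vectors. -/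
open InnerProductGeometry

open scoped RealInnerProductSpace

set_option maxHeartbeats 1000000 in
theorem stmt_8 (n : ℕ) (u v : EuclideanSpace ℝ (Fin n))
    (hu : u ≠ 0) (hv : v ≠ 0)
    (P : Submodule ℝ (EuclideanSpace ℝ (Fin n)))
    (hP : Module.finrank ℝ P = 2)
    (hne : ‖u‖⁻¹ • u ≠ ‖v‖⁻¹ • v)
    (hmem : ‖u‖⁻¹ • u - ‖v‖⁻¹ • v ∈ P)
    (huP : (Submodule.orthogonalProjectionOnto P u : EuclideanSpace ℝ (Fin n)) ≠ 0)
    (hvP : (Submodule.orthogonalProjectionOnto P v : EuclideanSpace ℝ (Fin n)) ≠ 0) :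
    1 - Real.cos (angle u v) ≤
      1 - Real.cos (angle (Submodule.orthogonalProjectionOnto P u : EuclideanSpace ℝ (Fin n))
        (Submodule.orthogonalProjectionOnto P v : EuclideanSpace ℝ (Fin n))) := by
  have hnu : (0:ℝ) < ‖u‖ := norm_pos_iff.mpr hu
  have hnv : (0:ℝ) < ‖v‖ := norm_pos_iff.mpr hv
  set u' : EuclideanSpace ℝ (Fin n) := ‖u‖⁻¹ • u with hu'
  set v' : EuclideanSpace ℝ (Fin n) := ‖v‖⁻¹ • v with hv'
  have hu'n : ‖u'‖ = 1 := norm_smul_inv_norm hu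
  have hv'n : ‖v'‖ = 1 := norm_smul_inv_norm hv
  set a : EuclideanSpace ℝ (Fin n) := (Submodule.orthogonalProjectionOnto P u' : EuclideanSpace ℝ (Fin n))
    with ha
  set b : EuclideanSpace ℝ (Fin n) := (Submodule.orthogonalProjectionOnto P v' : EuclideanSpace ℝ (Fin n))
    with hb
  have hau : a = ‖u‖⁻¹ • (Submodule.orthogonalProjectionOnto P u : EuclideanSpace ℝ (Fin n)) := by
    rw [ha, hu', map_smul]; rfl
  have hbv : b = ‖v‖⁻¹ • (Submodule.orthogonalProjectionOnto P v : EuclideanSpace ℝ (Fin n)) := by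
    rw [hb, hv', map_smul]; rfl
  have hane : a ≠ 0 := by
    rw [hau]; exact smul_ne_zero (inv_ne_zero hnu.ne') huP
  have hbne : b ≠ 0 := by
    rw [hbv]; exact smul_ne_zero (inv_ne_zero hnv.ne') hvP
  -- angle equalities
  have hang1 : angle u v = angle u' v' := by
    rw [hu', hv', angle_smul_left_of_pos _ _ (inv_pos.mpr hnu),
      angle_smul_right_of_pos _ _ (inv_pos.mpr hnv)]
  have hang2 : angle (Submodule.orthogonalProjectionOnto P u : EuclideanSpace ℝ (Fin n))
      (Submodule.orthogonalProjectionOnto P v : EuclideanSpace ℝ (Fin n)) = angle a b := by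
    rw [hau, hbv, angle_smul_left_of_pos _ _ (inv_pos.mpr hnu),
      angle_smul_right_of_pos _ _ (inv_pos.mpr hnv)]
  -- a - b = u' - v'
  have hsub : a - b = u' - v' := by
    rw [ha, hb, ← Submodule.coe_sub, ← map_sub]; exact Submodule.starProjection_eq_self_iff.mpr hmem
  -- orthogonality facts
  have hperpu : u' - a ∈ Pᗮ := Submodule.sub_starProjection_mem_orthogonal u'
  have hperpv : v' - b ∈ Pᗮ := Submodule.sub_starProjection_mem_orthogonal v'
  have hinnua : ⟪a, u' - a⟫ = 0 :=
    (Submodule.mem_orthogonal P _).mp hperpu a (SetLike.coe_mem _)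
  have hinnvb : ⟪b, v' - b⟫ = 0 :=
    (Submodule.mem_orthogonal P _).mp hperpv b (SetLike.coe_mem _)
  -- Pythagoras
  have pyth : ∀ (x p : EuclideanSpace ℝ (Fin n)), ⟪p, x - p⟫ = 0 →
      ‖x‖^2 = ‖p‖^2 + ‖x - p‖^2 := by
    intro x p h
    have h2 : p + (x - p) = x := by abel
    have h3 := norm_add_sq_real p (x - p)
    rw [h2, h] at h3
    linarith
  have hpu : ‖u'‖^2 = ‖a‖^2 + ‖u' - a‖^2 := pyth u' a hinnua
  have hpv : ‖v'‖^2 = ‖b‖^2 + ‖v' - b‖^2 := pyth v' b hinnvb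
  have hdiff : u' - a = v' - b := by
    have h := hsub
    linear_combination (norm := module) -h
  have hab : ‖a‖ = ‖b‖ := by
    have h1 : ‖a‖^2 = ‖b‖^2 := by
      rw [hdiff] at hpu
      rw [hu'n] at hpu; rw [hv'n] at hpv
      linarith
    exact (sq_eq_sq₀ (norm_nonneg a) (norm_nonneg b)).mp h1
  set r : ℝ := ‖a‖ with hr
  have hrpos : 0 < r := norm_pos_iff.mpr hane
  have hra : r^2 = ‖a‖^2 := by rw [hr]
  have hrb : r^2 = ‖b‖^2 := by rw [hab]
  have hrle : r ≤ 1 := by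
    rw [hu'n] at hpu
    norm_num at hpu
    nlinarith [hpu, sq_nonneg ‖u' - a‖, hrpos, hra]
  -- inner product relation from ‖a - b‖ = ‖u' - v'‖
  have hnormeq : ‖a - b‖ = ‖u' - v'‖ := by rw [hsub]
  have key : ⟪a, b⟫ = ⟪u', v'⟫ - 1 + r^2 := by
    have e1 : ‖a - b‖^2 = ‖a‖^2 - 2 * ⟪a, b⟫ + ‖b‖^2 := by
      rw [norm_sub_sq_real]
    have e2 : ‖u' - v'‖^2 = 1 - 2 * ⟪u', v'⟫ + 1 := by
      rw [norm_sub_sq_real, hu'n, hv'n]; ring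
    rw [hnormeq] at e1
    linarith [e1, e2, hra, hrb]
  -- cosines
  have hcos1 : Real.cos (angle u v) = ⟪u', v'⟫ := by
    rw [hang1, cos_angle, hu'n, hv'n]; simp
  have hcos2 : Real.cos (angle (Submodule.orthogonalProjectionOnto P u : EuclideanSpace ℝ (Fin n))
      (Submodule.orthogonalProjectionOnto P v : EuclideanSpace ℝ (Fin n))) = ⟪a, b⟫ / r^2 := by
    rw [hang2, cos_angle, ← hab, ← hr, pow_two]
  have hCS : ⟪u', v'⟫ ≤ 1 := by
    have h := real_inner_le_norm u' v'
    rwa [hu'n, hv'n, one_mul] at h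
  rw [hcos1, hcos2, key]
  have hr2 : (0:ℝ) < r^2 := pow_pos hrpos 2
  rw [sub_le_sub_iff_left, div_le_iff₀ hr2]
  nlinarith [mul_nonneg (by linarith : (0:ℝ) ≤ 1 - ⟪u', v'⟫) (by nlinarith [hrle, hrpos] : (0:ℝ) ≤ 1 - r^2)]
end

section
/- Let N ≥ k ≥ 1 and let Φ, Φ̄ : E → (ℝ^d)^N be measurable maps on a probability space (E, μ) whose laws are symmetric under permutations of the N coordinates, with k-th marginals μ^{(k)} and ν^{(k)} = ν^{⊗k} respectively (ν the common 1-coordinate law of Φ̄, whose coordinates are assumed exchangeable with product law). Then 𝒲₂²(μ^{(k)}, ν^{⊗k}) ≤ (k/N)·∫_E ∑_{i=1}^N |Φ_i - Φ̄_i|² dμ. -/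
open MeasureTheory Finset

/-- Squared Wasserstein-2 distance, defined as the infimum of `∫ dist(a,b)²`
over all couplings of `μ` and `ν`. -/
noncomputable def wasserstein2Sq {α : Type*} [MeasurableSpace α] [PseudoMetricSpace α]
    (μ ν : Measure α) : ℝ :=
  sInf { r : ℝ | ∃ π : Measure (α × α), IsProbabilityMeasure π ∧
    π.map Prod.fst = μ ∧ π.map Prod.snd = ν ∧
    r = ∫ p, dist p.1 p.2 ^ 2 ∂π }

lemma perm_sum_indep {N : ℕ} (c : Fin N → ℝ) (j j' : Fin N) :
    ∑ σ : Equiv.Perm (Fin N), c (σ j') = ∑ σ : Equiv.Perm (Fin N), c (σ j) :=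
  Fintype.sum_equiv (Equiv.mulRight (Equiv.swap j j')) _ _
    (fun σ => by simp [Equiv.Perm.mul_apply])

lemma perm_sum_eq {N : ℕ} (c : Fin N → ℝ) (j : Fin N) :
    (N : ℝ) * ∑ σ : Equiv.Perm (Fin N), c (σ j)
      = (Nat.factorial N : ℝ) * ∑ i, c i := by
  have h2 : ∑ j' : Fin N, ∑ σ : Equiv.Perm (Fin N), c (σ j')
      = (N : ℝ) * ∑ σ : Equiv.Perm (Fin N), c (σ j) := by
    rw [Finset.sum_congr rfl (fun j' _ => perm_sum_indep c j j')]
    simp [Finset.sum_const, mul_comm]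
  rw [← h2, Finset.sum_comm]
  have h3 : ∀ σ : Equiv.Perm (Fin N), ∑ j' : Fin N, c (σ j') = ∑ i, c i :=
    fun σ => Equiv.sum_comp σ c
  rw [Finset.sum_congr rfl (fun σ _ => h3 σ)]
  simp [Finset.sum_const, Fintype.card_perm, mul_comm]

lemma dist_pi_sq_le_sum {k d : ℕ} (x y : Fin k → EuclideanSpace ℝ (Fin d)) :
    dist x y ^ 2 ≤ ∑ j, ‖x j - y j‖ ^ 2 := by
  have hs : (0:ℝ) ≤ ∑ j, ‖x j - y j‖ ^ 2 :=
    Finset.sum_nonneg fun j _ => by positivity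
  have hd : dist x y ≤ Real.sqrt (∑ j, ‖x j - y j‖ ^ 2) := by
    rw [dist_pi_le_iff (Real.sqrt_nonneg _)]
    intro i
    rw [Real.le_sqrt dist_nonneg]
    calc dist (x i) (y i) ^ 2 = ‖x i - y i‖ ^ 2 := by rw [dist_eq_norm]
      _ ≤ ∑ j, ‖x j - y j‖ ^ 2 :=
        Finset.single_le_sum (f := fun j => ‖x j - y j‖ ^ 2)
          (fun j _ => by positivity) (Finset.mem_univ i)
    exact hs
  calc dist x y ^ 2 ≤ Real.sqrt (∑ j, ‖x j - y j‖ ^ 2) ^ 2 :=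
        pow_le_pow_left₀ dist_nonneg hd 2
    _ = ∑ j, ‖x j - y j‖ ^ 2 := Real.sq_sqrt hs

lemma single_dist_sq_le_pi {k d : ℕ} (x y : Fin k → EuclideanSpace ℝ (Fin d)) (i : Fin k) :
    ‖x i - y i‖ ^ 2 ≤ dist x y ^ 2 := by
  rw [← dist_eq_norm]
  exact pow_le_pow_left₀ dist_nonneg (dist_le_pi_dist x y i) 2

lemma dist_toLp_sq_eq {k d : ℕ} (x y : Fin k → EuclideanSpace ℝ (Fin d)) :
    dist (WithLp.toLp 2 x : PiLp 2 fun _ : Fin k => EuclideanSpace ℝ (Fin d)) (WithLp.toLp 2 y) ^ 2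
      = ∑ j, ‖x j - y j‖ ^ 2 := by
  rw [PiLp.dist_sq_eq_of_L2]
  simp only [PiLp.toLp_apply, dist_eq_norm]

theorem stmt_18 {E : Type*} [MeasurableSpace E] (μ : Measure E) [IsProbabilityMeasure μ]
    (d N k : ℕ) (hk : 1 ≤ k) (hkN : k ≤ N)
    (Φ Φb : E → Fin N → EuclideanSpace ℝ (Fin d))
    (hΦ : Measurable Φ) (hΦb : Measurable Φb)
    -- the laws of Φ and Φb are symmetric under permutations of the N coordinates
    (hsymΦ : ∀ σ : Equiv.Perm (Fin N), μ.map (fun e => Φ e ∘ σ) = μ.map Φ)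
    (hsymΦb : ∀ σ : Equiv.Perm (Fin N), μ.map (fun e => Φb e ∘ σ) = μ.map Φb)
    -- the coordinates of Φb are i.i.d. with common law ν : its k-th marginal is ν^{⊗k}
    (ν : Measure (EuclideanSpace ℝ (Fin d)))
    (hΦb_prod : μ.map (fun e => (WithLp.toLp 2 (fun i : Fin k => Φb e (Fin.castLE hkN i)) :
        PiLp 2 fun _ : Fin k => EuclideanSpace ℝ (Fin d)))
      = (Measure.pi fun _ : Fin k => ν).map (WithLp.toLp 2)) :
    wasserstein2Sq
        (μ.map (fun e => (WithLp.toLp 2 (fun i : Fin k => Φ e (Fin.castLE hkN i)) :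
          PiLp 2 fun _ : Fin k => EuclideanSpace ℝ (Fin d))))
        ((Measure.pi fun _ : Fin k => ν).map (WithLp.toLp 2))
      ≤ (k / N : ℝ) * ∫ e, ∑ i, ‖Φ e i - Φb e i‖ ^ 2 ∂μ := by
  classical
  -- truncation map, valued in the plain pi type
  set T : (Fin N → EuclideanSpace ℝ (Fin d)) → (Fin k → EuclideanSpace ℝ (Fin d)) :=
    fun g => fun j : Fin k => g (Fin.castLE hkN j) with hT
  have hTmeas : Measurable T := measurable_pi_lambda _ (fun j => measurable_pi_apply _)
  set G : Fin N → E → ℝ := fun i e => ‖Φ e i - Φb e i‖ ^ 2 with hGdef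
  have hGmeas : ∀ i, Measurable (G i) :=
    fun i => ((hΦ.eval.sub hΦb.eval).norm.pow_const 2)
  have hGnonneg : ∀ i e, 0 ≤ G i e := fun i e => by positivity
  -- the two maps defining the coupling associated to a permutation σ
  set X : Equiv.Perm (Fin N) → E → (Fin k → EuclideanSpace ℝ (Fin d)) :=
    fun σ e => T (Φ e ∘ σ) with hX
  set Y : Equiv.Perm (Fin N) → E → (Fin k → EuclideanSpace ℝ (Fin d)) :=
    fun σ e => T (Φb e ∘ σ) with hY
  have hΦσ : ∀ σ : Equiv.Perm (Fin N), Measurable (fun e => Φ e ∘ σ) :=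
    fun σ => measurable_pi_lambda _ (fun i => (measurable_pi_apply _).comp hΦ)
  have hΦbσ : ∀ σ : Equiv.Perm (Fin N), Measurable (fun e => Φb e ∘ σ) :=
    fun σ => measurable_pi_lambda _ (fun i => (measurable_pi_apply _).comp hΦb)
  have hXmeas : ∀ σ, Measurable (X σ) := fun σ => hTmeas.comp (hΦσ σ)
  have hYmeas : ∀ σ, Measurable (Y σ) := fun σ => hTmeas.comp (hΦbσ σ)
  have hL : Measurable (WithLp.toLp 2 : (Fin k → EuclideanSpace ℝ (Fin d)) →
      PiLp 2 fun _ : Fin k => EuclideanSpace ℝ (Fin d)) :=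
    (PiLp.continuous_toLp (p := 2) (β := fun _ : Fin k => EuclideanSpace ℝ (Fin d))).measurable
  have hTL : Measurable (fun g => (WithLp.toLp 2 (T g) :
      PiLp 2 fun _ : Fin k => EuclideanSpace ℝ (Fin d))) := hL.comp hTmeas
  -- key : each σ gives a coupling
  have key : ∀ σ : Equiv.Perm (Fin N),
      wasserstein2Sq
        (μ.map (fun e => (WithLp.toLp 2 (fun i : Fin k => Φ e (Fin.castLE hkN i)) :
          PiLp 2 fun _ : Fin k => EuclideanSpace ℝ (Fin d))))
        ((Measure.pi fun _ : Fin k => ν).map (WithLp.toLp 2))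
      ≤ ∫ e, dist (WithLp.toLp 2 (X σ e)) (WithLp.toLp 2 (Y σ e)) ^ 2 ∂μ := by
    intro σ
    have hpair : Measurable (fun e => (WithLp.toLp 2 (X σ e), WithLp.toLp 2 (Y σ e))) :=
      (hL.comp (hXmeas σ)).prodMk (hL.comp (hYmeas σ))
    refine csInf_le ⟨0, ?_⟩ ?_
    · rintro r ⟨π', _, _, _, rfl⟩
      exact integral_nonneg fun p => by positivity
    refine ⟨μ.map (fun e => (WithLp.toLp 2 (X σ e), WithLp.toLp 2 (Y σ e))), Measure.isProbabilityMeasure_map hpair.aemeasurable,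
      ?_, ?_, ?_⟩
    · rw [Measure.map_map measurable_fst hpair]
      have h1 : (Prod.fst ∘ fun e => (WithLp.toLp 2 (X σ e), WithLp.toLp 2 (Y σ e))) = (fun g => WithLp.toLp 2 (T g)) ∘ (fun e => Φ e ∘ σ) := rfl
      rw [h1, ← Measure.map_map hTL (hΦσ σ), hsymΦ σ, Measure.map_map hTL hΦ]
      rfl
    · rw [Measure.map_map measurable_snd hpair]
      have h1 : (Prod.snd ∘ fun e => (WithLp.toLp 2 (X σ e), WithLp.toLp 2 (Y σ e))) = (fun g => WithLp.toLp 2 (T g)) ∘ (fun e => Φb e ∘ σ) := rfl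
      rw [h1, ← Measure.map_map hTL (hΦbσ σ), hsymΦb σ, Measure.map_map hTL hΦb]
      exact hΦb_prod
    · exact (integral_map hpair.aemeasurable
        (((continuous_fst.dist continuous_snd).pow 2).aestronglyMeasurable)).symm
  -- pointwise bound on the coupling cost
  have hptwise : ∀ σ : Equiv.Perm (Fin N), ∀ e,
      dist (WithLp.toLp 2 (X σ e)) (WithLp.toLp 2 (Y σ e)) ^ 2 ≤ ∑ j : Fin k, G (σ (Fin.castLE hkN j)) e := by
    intro σ e
    have := (dist_toLp_sq_eq (X σ e) (Y σ e)).le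
    simpa [hX, hY, hT, hGdef] using this
  have hsingle : ∀ σ : Equiv.Perm (Fin N), ∀ (j : Fin k) e,
      G (σ (Fin.castLE hkN j)) e ≤ dist (WithLp.toLp 2 (X σ e)) (WithLp.toLp 2 (Y σ e)) ^ 2 := by
    intro σ j e
    have := (Finset.single_le_sum (f := fun j => ‖X σ e j - Y σ e j‖ ^ 2)
        (fun j _ => by positivity) (Finset.mem_univ j)).trans (dist_toLp_sq_eq (X σ e) (Y σ e)).ge
    simpa [hX, hY, hT, hGdef] using this
  have hdistmeas : ∀ σ : Equiv.Perm (Fin N),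
      Measurable (fun e => dist (WithLp.toLp 2 (X σ e)) (WithLp.toLp 2 (Y σ e)) ^ 2) :=
    fun σ => (((hL.comp (hXmeas σ)).dist (hL.comp (hYmeas σ))).pow_const 2)
  set F : E → ℝ := fun e => ∑ i, G i e with hF
  by_cases hInt : Integrable F μ
  · -- integrable case : average over permutations
    have hGi : ∀ i, Integrable (G i) μ := by
      intro i
      refine hInt.mono' (hGmeas i).aestronglyMeasurable (ae_of_all _ fun e => ?_)
      rw [Real.norm_of_nonneg (hGnonneg i e)]
      exact Finset.single_le_sum (fun j _ => hGnonneg j e) (Finset.mem_univ i)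
    have hcostInt : ∀ σ : Equiv.Perm (Fin N),
        Integrable (fun e => ∑ j : Fin k, G (σ (Fin.castLE hkN j)) e) μ :=
      fun σ => integrable_finset_sum _ (fun j _ => hGi _)
    have hkey2 : ∀ σ : Equiv.Perm (Fin N),
        ∫ e, dist (WithLp.toLp 2 (X σ e)) (WithLp.toLp 2 (Y σ e)) ^ 2 ∂μ
          ≤ ∫ e, ∑ j : Fin k, G (σ (Fin.castLE hkN j)) e ∂μ := by
      intro σ
      exact integral_mono_of_nonneg (ae_of_all _ fun e => by positivity)
        (hcostInt σ) (ae_of_all _ (hptwise σ))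
    set c : Fin N → ℝ := fun i => ∫ e, G i e ∂μ with hc
    have hcost : ∀ σ : Equiv.Perm (Fin N),
        ∫ e, ∑ j : Fin k, G (σ (Fin.castLE hkN j)) e ∂μ
          = ∑ j : Fin k, c (σ (Fin.castLE hkN j)) :=
      fun σ => integral_finset_sum _ (fun j _ => hGi _)
    have hFint : ∫ e, F e ∂μ = ∑ i, c i := integral_finset_sum _ (fun i _ => hGi i)
    have hNpos : (0 : ℝ) < N := by
      have : 1 ≤ N := le_trans hk hkN
      exact_mod_cast Nat.lt_of_lt_of_le Nat.zero_lt_one this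
    have havg : ∃ σ : Equiv.Perm (Fin N),
        ∑ j : Fin k, c (σ (Fin.castLE hkN j)) ≤ (k / N : ℝ) * ∑ i, c i := by
      have hne : (Finset.univ : Finset (Equiv.Perm (Fin N))).Nonempty := univ_nonempty
      have hsum : ∑ σ : Equiv.Perm (Fin N), ∑ j : Fin k, c (σ (Fin.castLE hkN j))
          ≤ ∑ _σ : Equiv.Perm (Fin N), (k / N : ℝ) * ∑ i, c i := by
        rw [Finset.sum_comm]
        have hsj : ∀ j : Fin k,
            ∑ σ : Equiv.Perm (Fin N), c (σ (Fin.castLE hkN j))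
              = (Nat.factorial N : ℝ) / N * ∑ i, c i := by
          intro j
          rw [div_mul_eq_mul_div, eq_div_iff hNpos.ne']
          linear_combination perm_sum_eq c (Fin.castLE hkN j)
        rw [Finset.sum_congr rfl (fun j _ => hsj j)]
        simp only [Finset.sum_const, card_univ, Fintype.card_fin, Fintype.card_perm,
          nsmul_eq_mul]
        refine le_of_eq ?_
        field_simp
      obtain ⟨σ, _, hσ⟩ := Finset.exists_le_of_sum_le hne hsum
      exact ⟨σ, hσ⟩
    obtain ⟨σ, hσ⟩ := havg
    calc wasserstein2Sq _ _ ≤ ∫ e, dist (WithLp.toLp 2 (X σ e)) (WithLp.toLp 2 (Y σ e)) ^ 2 ∂μ := key σ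
      _ ≤ ∫ e, ∑ j : Fin k, G (σ (Fin.castLE hkN j)) e ∂μ := hkey2 σ
      _ = ∑ j : Fin k, c (σ (Fin.castLE hkN j)) := hcost σ
      _ ≤ (k / N : ℝ) * ∑ i, c i := hσ
      _ = (k / N : ℝ) * ∫ e, F e ∂μ := by rw [hFint]
  · -- non-integrable case : both sides vanish
    have hRHS : ∫ e, F e ∂μ = 0 := integral_undef hInt
    obtain ⟨i, hi⟩ : ∃ i, ¬ Integrable (G i) μ := by
      by_contra h
      push_neg at h
      exact hInt (integrable_finset_sum _ (fun i _ => h i))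
    set j0 : Fin k := ⟨0, hk⟩ with hj0
    set σ : Equiv.Perm (Fin N) := Equiv.swap (Fin.castLE hkN j0) i with hσdef
    have hσ0 : σ (Fin.castLE hkN j0) = i := Equiv.swap_apply_left _ _
    have hNI : ¬ Integrable (fun e => dist (WithLp.toLp 2 (X σ e)) (WithLp.toLp 2 (Y σ e)) ^ 2) μ := by
      intro hci
      apply hi
      refine hci.mono' (hGmeas i).aestronglyMeasurable (ae_of_all _ fun e => ?_)
      rw [Real.norm_of_nonneg (hGnonneg i e)]
      have := hsingle σ j0 e
      rwa [hσ0] at this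
    have hcost0 : ∫ e, dist (WithLp.toLp 2 (X σ e)) (WithLp.toLp 2 (Y σ e)) ^ 2 ∂μ = 0 := integral_undef hNI
    calc wasserstein2Sq _ _ ≤ ∫ e, dist (WithLp.toLp 2 (X σ e)) (WithLp.toLp 2 (Y σ e)) ^ 2 ∂μ := key σ
      _ = 0 := hcost0
      _ = (k / N : ℝ) * ∫ e, F e ∂μ := by rw [hRHS, mul_zero]
end
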